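/- For every y ∈ ℝⁿ, the noise-free estimator equals SURE applied to the Gaussian-smoothed prediction function: ‖y − (g*φ_{ασ²})(y)‖₂² + (2/√α) E_{ω~N(0,σ²Iₙ)}[ ωᵀ g(y + √α ω) ] = ‖y − (g*φ_{ασ²})(y)‖₂² + 2σ² ∇·(g*φ_{ασ²})(y); that is, 𝐶𝑉̄_α(y) = SURE(g*φ_{ασ²})(y), where 𝐶𝑉̄_α(y) = ‖y − E[g(y+√αω)]‖₂² + (2/√α) E[ωᵀ g(y+√αω)] and SURE(h)(y) = ‖y − h(y)‖₂² + 2σ² ∇·h(y). -/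

import Mathlib

open MeasureTheory Filter Topology

/-- Density of the Gaussian distribution `N(0, τ²Iₙ)` on `ℝⁿ`. -/
noncomputable def gpdf (n : ℕ) (τ2 : ℝ) (z : Fin n → ℝ) : ℝ :=
  (2 * Real.pi * τ2) ^ (-(n : ℝ) / 2) * Real.exp (-(∑ i, (z i) ^ 2) / (2 * τ2))

/-- The Gaussian measure `N(θ, τ²Iₙ)` on `ℝⁿ`. -/
noncomputable def gauss (n : ℕ) (θ : Fin n → ℝ) (τ2 : ℝ) : Measure (Fin n → ℝ) :=
  volume.withDensity fun y => ENNReal.ofReal (gpdf n τ2 (y - θ))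

/-- Componentwise convolution `(g * φ_{τ²})(y) = ∫ g(y − z) φ_{τ²}(z) dz`. -/
noncomputable def smoothed (n : ℕ) (τ2 : ℝ) (g : (Fin n → ℝ) → (Fin n → ℝ))
    (y : Fin n → ℝ) : Fin n → ℝ :=
  fun i => ∫ z, g (y - z) i * gpdf n τ2 z

/-- Divergence `∇·h(y) = ∑ᵢ ∂hᵢ/∂yᵢ(y)` of `h : ℝⁿ → ℝⁿ`. -/
noncomputable def diverg (n : ℕ) (h : (Fin n → ℝ) → (Fin n → ℝ)) (y : Fin n → ℝ) : ℝ :=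
  ∑ i, fderiv ℝ (fun u => h u i) y (Pi.single i 1)

lemma gpdf_nonneg (n : ℕ) (τ2 : ℝ) (hτ2 : 0 < τ2) (z : Fin n → ℝ) : 0 ≤ gpdf n τ2 z :=
  mul_nonneg (Real.rpow_pos_of_pos (by positivity) _).le (Real.exp_nonneg _)

lemma gpdf_continuous (n : ℕ) (τ2 : ℝ) : Continuous (gpdf n τ2) := by
  unfold gpdf; fun_prop

noncomputable def gradCLM (n : ℕ) (w : Fin n → ℝ) : (Fin n → ℝ) →L[ℝ] ℝ :=
  ∑ i, w i • ContinuousLinearMap.proj i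

lemma gradCLM_apply (n : ℕ) (w v : Fin n → ℝ) : gradCLM n w v = ∑ i, w i * v i := by
  simp [gradCLM]

lemma gradCLM_single (n : ℕ) (w : Fin n → ℝ) (i : Fin n) :
    gradCLM n w (Pi.single i 1) = w i := by
  simp [gradCLM_apply, Pi.single_apply]

lemma gradCLM_continuous (n : ℕ) : Continuous (gradCLM n) := by
  unfold gradCLM
  exact continuous_finset_sum _ fun i _ => ((continuous_apply i).smul continuous_const)

lemma gradCLM_norm_le (n : ℕ) (w : Fin n → ℝ) : ‖gradCLM n w‖ ≤ ∑ i, |w i| := by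
  refine (norm_sum_le _ _).trans (Finset.sum_le_sum fun i _ => ?_)
  refine ContinuousLinearMap.opNorm_le_bound _ (abs_nonneg _) fun v => ?_
  have h1 : |v i| ≤ ‖v‖ := by simpa using norm_le_pi_norm v i
  have : ‖(w i • (ContinuousLinearMap.proj i : (Fin n → ℝ) →L[ℝ] ℝ)) v‖ = |w i| * |v i| := by
    simp [abs_mul]
  rw [this]
  exact mul_le_mul_of_nonneg_left h1 (abs_nonneg _)

lemma gpdf_hasFDerivAt (n : ℕ) (τ2 : ℝ) (hτ2 : 0 < τ2) (z : Fin n → ℝ) :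
    HasFDerivAt (gpdf n τ2) ((-τ2⁻¹ * gpdf n τ2 z) • gradCLM n z) z := by
  have h1 : HasFDerivAt (fun z : Fin n → ℝ => ∑ i, (z i)^2) ((2:ℝ) • gradCLM n z) z := by
    have key : ∀ i : Fin n, HasFDerivAt (fun z : Fin n → ℝ => (z i)^2)
        (((2:ℝ) * z i ^ 1) • (ContinuousLinearMap.proj i : (Fin n → ℝ) →L[ℝ] ℝ)) z := by
      intro i
      have hp : HasFDerivAt (fun z : Fin n → ℝ => z i)
          (ContinuousLinearMap.proj i : (Fin n → ℝ) →L[ℝ] ℝ) z :=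
        (ContinuousLinearMap.proj i : (Fin n → ℝ) →L[ℝ] ℝ).hasFDerivAt
      have hd : HasDerivAt (fun t : ℝ => t ^ 2) ((2:ℝ) * z i ^ 1) (z i) := by
        simpa using hasDerivAt_pow 2 (z i)
      exact hd.comp_hasFDerivAt z hp
    have hsum := HasFDerivAt.sum (fun i (_ : i ∈ Finset.univ) => key i)
    have : (∑ i : Fin n, ((2:ℝ) * z i ^ 1) • (ContinuousLinearMap.proj i : (Fin n → ℝ) →L[ℝ] ℝ))
        = (2:ℝ) • gradCLM n z := by
      unfold gradCLM
      rw [Finset.smul_sum]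
      exact Finset.sum_congr rfl fun i _ => by rw [smul_smul]; ring_nf
    rw [this] at hsum
    exact hsum.congr_of_eventuallyEq (Filter.Eventually.of_forall fun w => by simp [Finset.sum_apply])
  have hfun : gpdf n τ2 = fun z : Fin n → ℝ =>
      (2 * Real.pi * τ2) ^ (-(n : ℝ) / 2) * Real.exp ((-(2*τ2)⁻¹) * ∑ i, (z i)^2) := by
    funext z; unfold gpdf; congr 1; ring_nf
  have h2 : HasFDerivAt (fun z : Fin n → ℝ => (-(2*τ2)⁻¹) * ∑ i, (z i)^2)
      ((-(2*τ2)⁻¹) • ((2:ℝ) • gradCLM n z)) z := h1.const_mul _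
  have h3 := (h2.exp).const_mul ((2 * Real.pi * τ2) ^ (-(n : ℝ) / 2))
  rw [hfun]
  refine HasFDerivAt.congr_fderiv h3 ?_
  rw [smul_smul, smul_smul, smul_smul]
  congr 1
  have : Real.exp ((-(2*τ2)⁻¹) * ∑ i, (z i)^2) = Real.exp (-(∑ i, (z i) ^ 2) / (2 * τ2)) := by
    congr 1; ring
  rw [this]
  beta_reduce
  rw [this]
  field_simp

def sgnv (n : ℕ) (t : Finset (Fin n)) : Fin n → ℝ := fun i => if i ∈ t then 1 else -1

lemma gpdf_shift_bound (n : ℕ) (τ2 : ℝ) (hτ2 : 0 < τ2) (v d : Fin n → ℝ)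
    (hd : ∀ i, |d i| ≤ 1) :
    gpdf n τ2 (v + d) ≤ Real.exp (n / (2 * τ2)) *
      ∑ t ∈ (Finset.univ : Finset (Fin n)).powerset, gpdf n τ2 (v - sgnv n t) := by
  have hC : (0:ℝ) ≤ (2 * Real.pi * τ2) ^ (-(n : ℝ) / 2) :=
    (Real.rpow_pos_of_pos (by positivity) _).le
  have e1 : ∀ (w : Fin n → ℝ), -(∑ i, (w i)^2) / (2*τ2) = ∑ i, -((w i)^2) / (2*τ2) := by
    intro w
    rw [← Finset.sum_div]
    congr 1
    rw [Finset.sum_neg_distrib]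
  have s1 : Real.exp (-(∑ i, ((v+d) i)^2) / (2*τ2)) ≤
      ∏ i, Real.exp ((-(v i)^2 + 2*|v i|) / (2*τ2)) := by
    rw [← Real.exp_sum]
    apply Real.exp_le_exp.2
    rw [e1]
    apply Finset.sum_le_sum
    intro i _
    have h2 : 0 < 2 * τ2 := by positivity
    rw [div_le_div_iff_of_pos_right h2] -- maybe wrong name
    have hdi := hd i
    have habs : |v i * d i| ≤ |v i| := by
      rw [abs_mul]
      calc |v i| * |d i| ≤ |v i| * 1 := by
            exact mul_le_mul_of_nonneg_left hdi (abs_nonneg _)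
        _ = |v i| := by ring
    have h3 := neg_abs_le (v i * d i)
    have h4 := sq_nonneg (d i)
    simp only [Pi.add_apply]
    nlinarith
  have s2 : (∏ i, Real.exp ((-(v i)^2 + 2*|v i|) / (2*τ2))) ≤
      ∏ i, (Real.exp ((-(v i)^2 + 2*(v i)) / (2*τ2)) + Real.exp ((-(v i)^2 - 2*(v i)) / (2*τ2))) := by
    apply Finset.prod_le_prod (fun i _ => Real.exp_nonneg _)
    intro i _
    rcases abs_cases (v i) with ⟨h, _⟩ | ⟨h, _⟩
    · rw [h]; exact le_add_of_nonneg_right (Real.exp_nonneg _)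
    · rw [h]
      refine le_add_of_nonneg_left (Real.exp_nonneg _) |>.trans_eq' ?_
      ring_nf
  have s3 : (∏ i, (Real.exp ((-(v i)^2 + 2*(v i)) / (2*τ2)) + Real.exp ((-(v i)^2 - 2*(v i)) / (2*τ2))))
      = ∑ t ∈ (Finset.univ : Finset (Fin n)).powerset,
          Real.exp ((n:ℝ)/(2*τ2)) * Real.exp (-(∑ i, ((v - sgnv n t) i)^2) / (2*τ2)) := by
    rw [Finset.prod_add]
    apply Finset.sum_congr rfl
    intro t _
    have hmerge : (∏ i ∈ t, Real.exp ((-(v i)^2 + 2*(v i)) / (2*τ2))) *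
        ∏ i ∈ Finset.univ \ t, Real.exp ((-(v i)^2 - 2*(v i)) / (2*τ2))
        = ∏ i, Real.exp ((-(v i)^2 + 2*(sgnv n t i)*(v i)) / (2*τ2)) := by
      rw [← Finset.prod_mul_prod_compl t, Finset.compl_eq_univ_sdiff]
      congr 1
      · exact Finset.prod_congr rfl fun i hi => by simp [sgnv, hi]
      · refine Finset.prod_congr rfl fun i hi => ?_
        have : i ∉ t := (Finset.mem_sdiff.1 hi).2
        simp only [sgnv, if_neg this]
        ring_nf
    rw [hmerge, ← Real.exp_sum, ← Real.exp_add]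
    congr 1
    have hs2 : ∀ i, (sgnv n t i)^2 = 1 := by
      intro i; simp only [sgnv]; split_ifs <;> norm_num
    have : ∀ i, (-(v i)^2 + 2*(sgnv n t i)*(v i)) / (2*τ2)
        = 1/(2*τ2) + (-(((v - sgnv n t) i)^2)) / (2*τ2) := by
      intro i
      have := hs2 i
      field_simp
      ring_nf
      simp only [Pi.sub_apply]
      nlinarith [hs2 i]
    rw [Finset.sum_congr rfl fun i _ => this i, Finset.sum_add_distrib, e1]
    congr 1
    simp [Finset.card_univ]
    ring
  -- combine
  unfold gpdf
  calc (2 * Real.pi * τ2) ^ (-(n : ℝ) / 2) * Real.exp (-(∑ i, ((v+d) i)^2) / (2*τ2))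
      ≤ (2 * Real.pi * τ2) ^ (-(n : ℝ) / 2) *
        ∑ t ∈ (Finset.univ : Finset (Fin n)).powerset,
          Real.exp ((n:ℝ)/(2*τ2)) * Real.exp (-(∑ i, ((v - sgnv n t) i)^2) / (2*τ2)) := by
        apply mul_le_mul_of_nonneg_left _ hC
        exact (s1.trans s2).trans_eq s3
    _ = Real.exp ((n:ℝ)/(2*τ2)) * ∑ t ∈ (Finset.univ : Finset (Fin n)).powerset,
          (2 * Real.pi * τ2) ^ (-(n : ℝ) / 2) * Real.exp (-(∑ i, ((v - sgnv n t) i)^2) / (2*τ2)) := by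
        rw [Finset.mul_sum, Finset.mul_sum]
        congr 1; ext t; ring

lemma smoothed_eq (n : ℕ) (τ2 : ℝ) (g : (Fin n → ℝ) → (Fin n → ℝ)) (u : Fin n → ℝ) (i : Fin n) :
    smoothed n τ2 g u i = ∫ x, g x i * gpdf n τ2 (u - x) := by
  unfold smoothed
  rw [← integral_sub_left_eq_self (fun x => g x i * gpdf n τ2 (u - x)) volume u]
  congr 1 with z
  rw [sub_sub_cancel]

lemma abs_le_sqrt_sum {n : ℕ} (w : Fin n → ℝ) (j : Fin n) :
    |w j| ≤ Real.sqrt (∑ k, (w k)^2) := by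
  rw [← Real.sqrt_sq_eq_abs]
  exact Real.sqrt_le_sqrt (Finset.single_le_sum (fun k _ => sq_nonneg (w k)) (Finset.mem_univ j))

lemma smoothed_fderiv_single
    (n : ℕ) (τ2 : ℝ) (hτ2 : 0 < τ2) (g : (Fin n → ℝ) → (Fin n → ℝ)) (hg : Measurable g)
    (hint1 : ∀ y : Fin n → ℝ,
      Integrable (fun x => Real.sqrt (∑ i, (g x i) ^ 2) * gpdf n τ2 (y - x)))
    (hint2 : ∀ y : Fin n → ℝ,
      Integrable (fun x => Real.sqrt (∑ i, (g x i) ^ 2)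
        * Real.sqrt (∑ i, (y i - x i) ^ 2) * gpdf n τ2 (y - x)))
    (y : Fin n → ℝ) (i : Fin n) :
    fderiv ℝ (fun u => smoothed n τ2 g u i) y (Pi.single i 1)
      = -τ2⁻¹ * ∫ x, g x i * ((y i - x i) * gpdf n τ2 (y - x)) := by
  classical
  set G : (Fin n → ℝ) → ℝ := fun x => Real.sqrt (∑ j, (g x j) ^ 2) with hG
  have hGnonneg : ∀ x, 0 ≤ G x := fun x => Real.sqrt_nonneg _
  have hgabs : ∀ x (j : Fin n), |g x j| ≤ G x := fun x j => abs_le_sqrt_sum (g x) j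
  set F : (Fin n → ℝ) → (Fin n → ℝ) → ℝ := fun u x => g x i * gpdf n τ2 (u - x) with hF
  set F' : (Fin n → ℝ) → (Fin n → ℝ) → ((Fin n → ℝ) →L[ℝ] ℝ) :=
    fun u x => (g x i * (-τ2⁻¹ * gpdf n τ2 (u - x))) • gradCLM n (u - x) with hF'
  set bound : (Fin n → ℝ) → ℝ := fun x =>
    τ2⁻¹ * Real.exp (n / (2 * τ2)) *
      ∑ t ∈ (Finset.univ : Finset (Fin n)).powerset,
        ((2 * n) * (G x * gpdf n τ2 (y - sgnv n t - x))
          + n * (G x * Real.sqrt (∑ j, ((y - sgnv n t) j - x j) ^ 2)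
              * gpdf n τ2 (y - sgnv n t - x))) with hbound
  have hgi : Measurable fun x => g x i := (measurable_pi_apply i).comp hg
  have hF_meas : ∀ u : Fin n → ℝ, AEStronglyMeasurable (F u) volume := by
    intro u
    exact (hgi.mul (((gpdf_continuous n τ2).comp
      (continuous_const.sub continuous_id)).measurable)).aestronglyMeasurable
  have hF_int : Integrable (F y) volume := by
    refine (hint1 y).mono' (hF_meas y) (Filter.Eventually.of_forall fun x => ?_)
    simp only [hF, Real.norm_eq_abs, abs_mul]
    rw [abs_of_nonneg (gpdf_nonneg n τ2 hτ2 _)]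
    exact mul_le_mul_of_nonneg_right (hgabs x i) (gpdf_nonneg n τ2 hτ2 _)
  have hF'_meas : ∀ u : Fin n → ℝ, AEStronglyMeasurable (F' u) volume := by
    intro u
    refine AEStronglyMeasurable.fun_smul ?_ ?_
    · exact (hgi.mul ((((gpdf_continuous n τ2).comp
        (continuous_const.sub continuous_id)).measurable).const_mul _)).aestronglyMeasurable
    · exact ((gradCLM_continuous n).comp
        (continuous_const.sub continuous_id)).aestronglyMeasurable
  have hbound_int : Integrable bound volume := by
    refine Integrable.const_mul ?_ _
    refine integrable_finset_sum _ fun t _ => ?_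
    exact ((hint1 (y - sgnv n t)).const_mul _).add ((hint2 (y - sgnv n t)).const_mul _)
  have h_diff : ∀ x : Fin n → ℝ, ∀ u ∈ Metric.ball y 1,
      HasFDerivAt (fun u => F u x) (F' u x) u := by
    intro x u _
    have hsub : HasFDerivAt (fun u : Fin n → ℝ => u - x)
        (ContinuousLinearMap.id ℝ (Fin n → ℝ)) u := (hasFDerivAt_id u).sub_const x
    have h1 := (gpdf_hasFDerivAt n τ2 hτ2 (u - x)).comp u hsub
    rw [ContinuousLinearMap.comp_id] at h1
    have h2 := h1.const_mul (g x i)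
    have heq : F' u x = g x i • ((-τ2⁻¹ * gpdf n τ2 (u - x)) • gradCLM n (u - x)) := by
      rw [hF']; rw [smul_smul]
    rw [heq]
    exact h2
  have h_bound : ∀ x : Fin n → ℝ, ∀ u ∈ Metric.ball y 1, ‖F' u x‖ ≤ bound x := by
    intro x u hu
    set E := Real.exp (n / (2 * τ2)) with hE
    have hEpos : 0 < E := Real.exp_pos _
    set P : Finset (Fin n) → ℝ := fun t => gpdf n τ2 (y - sgnv n t - x) with hP
    have hPnonneg : ∀ t, 0 ≤ P t := fun t => gpdf_nonneg n τ2 hτ2 _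
    set R : Finset (Fin n) → ℝ := fun t => Real.sqrt (∑ j, ((y - sgnv n t) j - x j) ^ 2) with hR
    have hRnonneg : ∀ t, 0 ≤ R t := fun t => Real.sqrt_nonneg _
    set Su : ℝ := ∑ j, |u j - x j| with hSu
    have hSunonneg : 0 ≤ Su := Finset.sum_nonneg fun j _ => abs_nonneg _
    -- step 1 : ‖F' u x‖ ≤ (G x * τ2⁻¹) * (gpdf n τ2 (u - x) * Su)
    have step1 : ‖F' u x‖ ≤ G x * τ2⁻¹ * (gpdf n τ2 (u - x) * Su) := by
      have hrfl : F' u x = (g x i * (-τ2⁻¹ * gpdf n τ2 (u - x))) • gradCLM n (u - x) := rfl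
      have hns := norm_smul (g x i * (-τ2⁻¹ * gpdf n τ2 (u - x))) (gradCLM n (u - x))
      rw [hrfl, hns]
      have h1 : ‖g x i * (-τ2⁻¹ * gpdf n τ2 (u - x))‖ ≤ G x * τ2⁻¹ * gpdf n τ2 (u - x) := by
        rw [Real.norm_eq_abs, abs_mul, abs_mul, abs_neg, abs_inv, abs_of_pos hτ2,
          abs_of_nonneg (gpdf_nonneg n τ2 hτ2 _), mul_assoc]
        refine mul_le_mul_of_nonneg_right (hgabs x i) ?_
        exact mul_nonneg (inv_nonneg.2 hτ2.le) (gpdf_nonneg n τ2 hτ2 _)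
      have h2 : ‖gradCLM n (u - x)‖ ≤ Su := by
        refine (gradCLM_norm_le n _).trans_eq ?_
        simp [hSu]
      calc ‖g x i * (-τ2⁻¹ * gpdf n τ2 (u - x))‖ * ‖gradCLM n (u - x)‖
          ≤ (G x * τ2⁻¹ * gpdf n τ2 (u - x)) * Su := by
            exact mul_le_mul h1 h2 (norm_nonneg _)
              (mul_nonneg (mul_nonneg (hGnonneg x) (inv_nonneg.2 hτ2.le)) (gpdf_nonneg n τ2 hτ2 _))
        _ = G x * τ2⁻¹ * (gpdf n τ2 (u - x) * Su) := by ring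
    -- gpdf bound across the ball
    have hgp : gpdf n τ2 (u - x) ≤ E * ∑ t ∈ (Finset.univ : Finset (Fin n)).powerset, P t := by
      have h1 : u - x = (y - x) + (u - y) := by abel
      have h2 : ∀ j, |(u - y) j| ≤ 1 := by
        intro j
        have := dist_le_pi_dist u y j
        rw [Real.dist_eq] at this
        have hlt : dist u y < 1 := Metric.mem_ball.1 hu
        simpa using (this.trans hlt.le)
      have h3 := gpdf_shift_bound n τ2 hτ2 (y - x) (u - y) h2
      rw [← h1] at h3
      refine h3.trans_eq ?_
      congr 1
      refine Finset.sum_congr rfl fun t _ => ?_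
      rw [hP]
      congr 1
      abel
    -- Su bounds
    have hSu_le : ∀ t : Finset (Fin n), Su ≤ 2 * n + n * R t := by
      intro t
      have h1 : Su ≤ (n : ℝ) + ∑ j, |y j - x j| := by
        rw [hSu]
        have : ∀ j : Fin n, |u j - x j| ≤ 1 + |y j - x j| := by
          intro j
          have h2 : |u j - y j| ≤ 1 := by
            have := dist_le_pi_dist u y j
            rw [Real.dist_eq] at this
            have hlt : dist u y < 1 := Metric.mem_ball.1 hu
            simpa using (this.trans hlt.le)
          calc |u j - x j| = |(u j - y j) + (y j - x j)| := by ring_nf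
            _ ≤ |u j - y j| + |y j - x j| := abs_add_le _ _
            _ ≤ 1 + |y j - x j| := by linarith
        refine (Finset.sum_le_sum fun j _ => this j).trans_eq ?_
        rw [Finset.sum_add_distrib]
        simp [Finset.card_univ]
      have h2 : ∑ j, |y j - x j| ≤ (n : ℝ) + n * R t := by
        have : ∀ j : Fin n, |y j - x j| ≤ 1 + R t := by
          intro j
          have ha : |y j - (y - sgnv n t) j| = 1 := by
            simp only [Pi.sub_apply]
            have : y j - (y j - sgnv n t j) = sgnv n t j := by ring
            rw [this]
            simp only [sgnv]
            split_ifs <;> norm_num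
          have hb : |(y - sgnv n t) j - x j| ≤ R t := by
            have := abs_le_sqrt_sum (fun j => (y - sgnv n t) j - x j) j
            simpa [hR] using this
          calc |y j - x j| = |(y j - (y - sgnv n t) j) + ((y - sgnv n t) j - x j)| := by
                congr 1; simp only [Pi.sub_apply]; ring
            _ ≤ |y j - (y - sgnv n t) j| + |(y - sgnv n t) j - x j| := abs_add_le _ _
            _ ≤ 1 + R t := by rw [ha]; linarith
        refine (Finset.sum_le_sum fun j _ => this j).trans_eq ?_
        rw [Finset.sum_add_distrib, Finset.sum_const, Finset.sum_const, Finset.card_univ,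
          Fintype.card_fin, nsmul_eq_mul, nsmul_eq_mul, mul_one]
      linarith
    calc ‖F' u x‖ ≤ G x * τ2⁻¹ * (gpdf n τ2 (u - x) * Su) := step1
      _ ≤ G x * τ2⁻¹ * ((E * ∑ t ∈ (Finset.univ : Finset (Fin n)).powerset, P t) * Su) := by
          have := mul_le_mul_of_nonneg_right hgp hSunonneg
          have h0 : 0 ≤ G x * τ2⁻¹ := by positivity
          exact mul_le_mul_of_nonneg_left this h0
      _ = G x * τ2⁻¹ * (E * ∑ t ∈ (Finset.univ : Finset (Fin n)).powerset, P t * Su) := by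
          rw [mul_assoc E, Finset.sum_mul]
      _ ≤ G x * τ2⁻¹ * (E * ∑ t ∈ (Finset.univ : Finset (Fin n)).powerset,
            P t * (2 * n + n * R t)) := by
          have hsum : ∑ t ∈ (Finset.univ : Finset (Fin n)).powerset, P t * Su
              ≤ ∑ t ∈ (Finset.univ : Finset (Fin n)).powerset, P t * (2 * n + n * R t) :=
            Finset.sum_le_sum fun t _ => mul_le_mul_of_nonneg_left (hSu_le t) (hPnonneg t)
          have h0 : 0 ≤ G x * τ2⁻¹ := by positivity
          exact mul_le_mul_of_nonneg_left (mul_le_mul_of_nonneg_left hsum hEpos.le) h0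
      _ = bound x := by
          have hb : bound x = τ2⁻¹ * E * ∑ t ∈ (Finset.univ : Finset (Fin n)).powerset,
              ((2 * n) * (G x * P t) + n * (G x * R t * P t)) := rfl
          rw [hb, Finset.mul_sum, Finset.mul_sum, Finset.mul_sum]
          exact Finset.sum_congr rfl fun t _ => by ring
  -- apply the dominated differentiation theorem
  have hDeriv : HasFDerivAt (fun u => ∫ x, F u x) (∫ x, F' y x) y := by
    refine hasFDerivAt_integral_of_dominated_of_fderiv_le (Metric.ball_mem_nhds y one_pos)
      (Filter.Eventually.of_forall hF_meas) hF_int (hF'_meas y)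
      (Filter.Eventually.of_forall h_bound) hbound_int
      (Filter.Eventually.of_forall h_diff)
  have hF'_int : Integrable (F' y) volume := by
    refine hbound_int.mono' (hF'_meas y) (Filter.Eventually.of_forall fun x => ?_)
    exact h_bound x y (Metric.mem_ball_self one_pos)
  have heqfun : (fun u => smoothed n τ2 g u i) = fun u => ∫ x, F u x := by
    funext u
    exact smoothed_eq n τ2 g u i
  rw [heqfun, hDeriv.fderiv, ContinuousLinearMap.integral_apply hF'_int]
  have : ∀ x : Fin n → ℝ, F' y x (Pi.single i 1)
      = -τ2⁻¹ * (g x i * ((y i - x i) * gpdf n τ2 (y - x))) := by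
    intro x
    rw [hF']
    simp only [ContinuousLinearMap.coe_smul', Pi.smul_apply, smul_eq_mul]
    rw [gradCLM_single]
    simp only [Pi.sub_apply]
    ring
  rw [integral_congr_ae (Filter.Eventually.of_forall this)]
  exact integral_const_mul _ _

lemma gpdf_sub_comm (n : ℕ) (τ2 : ℝ) (v w : Fin n → ℝ) :
    gpdf n τ2 (v - w) = gpdf n τ2 (w - v) := by
  have h : ∑ i, ((v - w) i)^2 = ∑ i, ((w - v) i)^2 :=
    Finset.sum_congr rfl fun i _ => by simp only [Pi.sub_apply]; ring
  unfold gpdf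
  rw [h]

lemma gpdf_scale (n : ℕ) (σ α : ℝ) (hσ : 0 < σ) (hα : 0 < α) (v : Fin n → ℝ) :
    |((Real.sqrt α ^ n)⁻¹ : ℝ)| * gpdf n (σ^2) ((Real.sqrt α)⁻¹ • v) = gpdf n (α*σ^2) v := by
  have hsα : 0 < Real.sqrt α := Real.sqrt_pos.2 hα
  rw [abs_of_pos (by positivity)]
  unfold gpdf
  have hsum : (∑ i, (((Real.sqrt α)⁻¹ • v) i)^2) = α⁻¹ * ∑ i, (v i)^2 := by
    rw [Finset.mul_sum]
    refine Finset.sum_congr rfl fun i _ => ?_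
    simp only [Pi.smul_apply, smul_eq_mul]
    rw [mul_pow, inv_pow, Real.sq_sqrt hα.le]
  rw [hsum]
  have hexp : Real.exp (-(α⁻¹ * ∑ i, (v i)^2) / (2 * σ^2))
      = Real.exp (-(∑ i, (v i)^2) / (2 * (α * σ^2))) := by
    congr 1
    rw [div_eq_div_iff (by positivity) (by positivity)]
    field_simp
  rw [hexp]
  have hpre : (Real.sqrt α ^ n)⁻¹ * (2 * Real.pi * σ^2) ^ (-(n : ℝ) / 2)
      = (2 * Real.pi * (α * σ^2)) ^ (-(n : ℝ) / 2) := by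
    have h1 : (2 * Real.pi * (α * σ^2)) = (2 * Real.pi * σ^2) * α := by ring
    rw [h1, Real.mul_rpow (by positivity) hα.le]
    have h2 : α ^ (-(n : ℝ) / 2) = (Real.sqrt α ^ n)⁻¹ := by
      rw [← Real.rpow_natCast (Real.sqrt α) n, Real.sqrt_eq_rpow,
        ← Real.rpow_mul hα.le, ← Real.rpow_neg_one (α ^ ((1:ℝ)/2 * n)),
        ← Real.rpow_mul hα.le]
      congr 1
      ring
    rw [h2]
    ring
  rw [← hpre]
  ring


/-- Connection with SURE: for every `y`, the noise-free estimator equals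
SURE applied to the Gaussian-smoothed prediction function:
`‖y − (g*φ_{ασ²})(y)‖₂² + (2/√α) E_{ω~N(0,σ²Iₙ)}[ωᵀ g(y + √α ω)]
  = ‖y − (g*φ_{ασ²})(y)‖₂² + 2σ² ∇·(g*φ_{ασ²})(y)`. -/
theorem noise_free_cv_eq_sure_smoothed
    (n : ℕ) (σ α : ℝ) (hσ : 0 < σ) (hα : 0 < α)
    (g : (Fin n → ℝ) → (Fin n → ℝ)) (hg : Measurable g)
    (hint1 : ∀ y : Fin n → ℝ,
      Integrable (fun x => Real.sqrt (∑ i, (g x i) ^ 2) * gpdf n (α * σ ^ 2) (y - x)))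
    (hint2 : ∀ y : Fin n → ℝ,
      Integrable (fun x => Real.sqrt (∑ i, (g x i) ^ 2)
        * Real.sqrt (∑ i, (y i - x i) ^ 2) * gpdf n (α * σ ^ 2) (y - x))) :
    ∀ y : Fin n → ℝ,
      (∑ i, (y i - smoothed n (α * σ ^ 2) g y i) ^ 2)
        + (2 / Real.sqrt α)
          * ∫ w, (∑ i, w i * g (y + Real.sqrt α • w) i) ∂(gauss n 0 (σ ^ 2))
      = (∑ i, (y i - smoothed n (α * σ ^ 2) g y i) ^ 2)
        + 2 * σ ^ 2 * diverg n (smoothed n (α * σ ^ 2) g) y := by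
  intro y
  have hτ2 : (0:ℝ) < α * σ ^ 2 := by positivity
  have hsα : 0 < Real.sqrt α := Real.sqrt_pos.2 hα
  congr 1
  -- notation
  set K : Fin n → ℝ :=
    fun i => ∫ x, g x i * ((y i - x i) * gpdf n (α * σ ^ 2) (y - x)) with hK
  have hgabs : ∀ x (j : Fin n), |g x j| ≤ Real.sqrt (∑ k, (g x k)^2) :=
    fun x j => abs_le_sqrt_sum (g x) j
  have hKint : ∀ i : Fin n,
      Integrable (fun x => g x i * ((y i - x i) * gpdf n (α * σ ^ 2) (y - x))) volume := by
    intro i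
    have hmeas : AEStronglyMeasurable
        (fun x => g x i * ((y i - x i) * gpdf n (α * σ ^ 2) (y - x))) volume := by
      exact (((measurable_pi_apply i).comp hg).mul
        (((continuous_const.sub (continuous_apply i)).mul
          ((gpdf_continuous n (α * σ ^ 2)).comp
            (continuous_const.sub continuous_id))).measurable)).aestronglyMeasurable
    refine (hint2 y).mono' hmeas (Filter.Eventually.of_forall fun x => ?_)
    rw [Real.norm_eq_abs, abs_mul, abs_mul, abs_of_nonneg (gpdf_nonneg n _ hτ2 _)]
    have h1 : |y i - x i| ≤ Real.sqrt (∑ k, (y k - x k)^2) :=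
      abs_le_sqrt_sum (fun k => y k - x k) i
    calc |g x i| * (|y i - x i| * gpdf n (α * σ ^ 2) (y - x))
        ≤ Real.sqrt (∑ k, (g x k)^2) * (Real.sqrt (∑ k, (y k - x k)^2)
            * gpdf n (α * σ ^ 2) (y - x)) := by
          refine mul_le_mul (hgabs x i) ?_
            (mul_nonneg (abs_nonneg _) (gpdf_nonneg n _ hτ2 _)) (Real.sqrt_nonneg _)
          exact mul_le_mul_of_nonneg_right h1 (gpdf_nonneg n _ hτ2 _)
      _ = Real.sqrt (∑ k, (g x k)^2) * Real.sqrt (∑ k, (y k - x k)^2)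
            * gpdf n (α * σ ^ 2) (y - x) := by ring
  -- RHS : divergence computation
  have hdiv : diverg n (smoothed n (α * σ ^ 2) g) y = -(α * σ ^ 2)⁻¹ * ∑ i, K i := by
    unfold diverg
    rw [Finset.mul_sum]
    refine Finset.sum_congr rfl fun i _ => ?_
    exact smoothed_fderiv_single n (α * σ ^ 2) hτ2 g hg hint1 hint2 y i
  -- LHS : the Gaussian integral
  set Φ : (Fin n → ℝ) → ℝ := fun x =>
    gpdf n (σ^2) ((Real.sqrt α)⁻¹ • (x - y)) * ∑ i, ((Real.sqrt α)⁻¹ * (x i - y i)) * g x i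
    with hΦ
  have hgauss : (∫ w, (∑ i, w i * g (y + Real.sqrt α • w) i) ∂(gauss n 0 (σ ^ 2)))
      = ∫ w, gpdf n (σ^2) w * ∑ i, w i * g (y + Real.sqrt α • w) i := by
    unfold gauss
    have hmeq : (volume.withDensity fun w : Fin n → ℝ => ENNReal.ofReal (gpdf n (σ^2) (w - 0)))
        = volume.withDensity fun w : Fin n → ℝ => ((gpdf n (σ^2) w).toNNReal : ENNReal) := by
      congr 1
      funext w
      rw [sub_zero]
      rfl
    rw [hmeq, integral_withDensity_eq_integral_smul
      ((gpdf_continuous n (σ^2)).measurable.real_toNNReal) _]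
    refine integral_congr_ae (Filter.Eventually.of_forall fun w => ?_)
    beta_reduce
    have : ((gpdf n (σ^2) w).toNNReal : ℝ) = gpdf n (σ^2) w :=
      Real.coe_toNNReal _ (gpdf_nonneg n _ (by positivity) w)
    rw [NNReal.smul_def, this, smul_eq_mul]
  have hcomp : (fun w : Fin n → ℝ => gpdf n (σ^2) w * ∑ i, w i * g (y + Real.sqrt α • w) i)
      = fun w : Fin n → ℝ => Φ (y + Real.sqrt α • w) := by
    funext w
    rw [hΦ]
    beta_reduce
    have h1 : (y + Real.sqrt α • w) - y = Real.sqrt α • w := by abel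
    have h2 : (Real.sqrt α)⁻¹ • (Real.sqrt α • w) = w := by
      rw [smul_smul, inv_mul_cancel₀ hsα.ne', one_smul]
    rw [h1, h2]
    congr 1
    refine Finset.sum_congr rfl fun i _ => ?_
    have h3 : (y + Real.sqrt α • w) i - y i = Real.sqrt α * w i := by
      simp [Pi.add_apply, Pi.smul_apply, smul_eq_mul]
    rw [h3, ← mul_assoc, inv_mul_cancel₀ hsα.ne', one_mul]
  have hCoV : (∫ w, Φ (y + Real.sqrt α • w))
      = |((Real.sqrt α ^ n)⁻¹ : ℝ)| * ∫ x, Φ x := by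
    have h1 : (fun w : Fin n → ℝ => Φ (y + Real.sqrt α • w))
        = fun w : Fin n → ℝ => (fun z => Φ (y + z)) (Real.sqrt α • w) := rfl
    rw [h1, Measure.integral_comp_smul volume (fun z => Φ (y + z)) (Real.sqrt α)]
    rw [integral_add_left_eq_self (fun z => Φ z) y]
    rw [smul_eq_mul]
    congr 2
    simp [Module.finrank_pi]
  have hpoint : ∀ x : Fin n → ℝ, |((Real.sqrt α ^ n)⁻¹ : ℝ)| * Φ x
      = ∑ i, ((Real.sqrt α)⁻¹ * (-1)) * (g x i * ((y i - x i) * gpdf n (α * σ ^ 2) (y - x))) := by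
    intro x
    have h0 : Φ x = gpdf n (σ^2) ((Real.sqrt α)⁻¹ • (x - y))
        * ∑ i, ((Real.sqrt α)⁻¹ * (x i - y i)) * g x i := rfl
    rw [h0, ← mul_assoc, gpdf_scale n σ α hσ hα (x - y), gpdf_sub_comm n (α*σ^2) x y,
      Finset.mul_sum]
    exact Finset.sum_congr rfl fun i _ => by ring
  have hInt : (∫ x, |((Real.sqrt α ^ n)⁻¹ : ℝ)| * Φ x)
      = ∑ i, ((Real.sqrt α)⁻¹ * (-1)) * K i := by
    rw [integral_congr_ae (Filter.Eventually.of_forall hpoint)]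
    rw [integral_finset_sum _ (fun i _ => (hKint i).const_mul _)]
    exact Finset.sum_congr rfl fun i _ => integral_const_mul _ _
  have hLHS : (∫ w, (∑ i, w i * g (y + Real.sqrt α • w) i) ∂(gauss n 0 (σ ^ 2)))
      = ((Real.sqrt α)⁻¹ * (-1)) * ∑ i, K i := by
    rw [hgauss, hcomp, hCoV, ← integral_const_mul, hInt, ← Finset.mul_sum]
  rw [hLHS, hdiv]
  have hq : Real.sqrt α * Real.sqrt α = α := Real.mul_self_sqrt hα.le
  field_simp
  ring_nf
  rw [Real.sq_sqrt hα.le]
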